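/- Let N ≥ 1 and let D = (C_1,…,C_r) be a northwest diagram with all columns contained in {1,…,N}. Then there exist permutations u_1,…,u_r of {1,…,N} such that, setting u_0 = identity: (α) ℓ(u_j) = ℓ(u_{j−1}) + ℓ(u_{j−1}^{−1} ∘ u_j) for all 1 ≤ j ≤ r, and (β) u_j({1,2,…,|C_j|}) = C_j for all 1 ≤ j ≤ r. -/

import Mathlib

/-- A diagram, given as a list of columns `C : Fin r → Finset ℕ`, is *northwest* if
for all `j ≤ j'`, `i ∈ C j` and `i' ∈ C j'` imply `min i i' ∈ C j`. -/
def IsNorthwest {r : ℕ} (C : Fin r → Finset ℕ) : Prop :=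
  ∀ j j' : Fin r, j ≤ j' → ∀ i ∈ C j, ∀ i' ∈ C j', min i i' ∈ C j

/-- `A` is an *initial subset* of `B` : `A ⊊ B` and every element of `B \ A` is greater
than every element of `A`. -/
def InitSub (A B : Finset ℕ) : Prop :=
  A ⊂ B ∧ ∀ x ∈ B \ A, ∀ y ∈ A, y < x

/-- Lexicographic comparison of finite subsets of `ℕ`, comparing the increasing lists of
elements: `A <lex B` iff the sorted list of `A` is smaller than that of `B` in the
(strict) lexicographic order on lists (in particular a proper initial segment is
smaller). -/
def LexLT (A B : Finset ℕ) : Prop :=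
  List.Lex (· < ·) (A.sort (· ≤ ·)) (B.sort (· ≤ ·))

/-- A list of columns is *lexicographic* if it is strictly increasing in `LexLT`
(in particular the columns are pairwise distinct). -/
def IsLex {r : ℕ} (C : Fin r → Finset ℕ) : Prop :=
  ∀ a b : Fin r, a < b → LexLT (C a) (C b)

/-- The Coxeter length of a permutation of `Fin N` : the number of inversions
`#{(i,j) : i < j, u i > u j}`. -/
def invLen {N : ℕ} (u : Equiv.Perm (Fin N)) : ℕ :=
  (Finset.univ.filter (fun p : Fin N × Fin N => p.1 < p.2 ∧ u p.2 < u p.1)).card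


open Finset

/-- Length additivity: if every inversion of `x` stays an inversion after applying `w`,
then `ℓ(w x) = ℓ(w) + ℓ(x)`. -/
lemma invLen_mul_add {N : ℕ} (w x : Equiv.Perm (Fin N))
    (h : ∀ i k : Fin N, i < k → x k < x i → w (x k) < w (x i)) :
    invLen (w * x) = invLen w + invLen x := by
  classical
  unfold invLen
  have key : (univ.filter (fun p : Fin N × Fin N => p.1 < p.2 ∧ (w * x) p.2 < (w * x) p.1))
      = (univ.filter (fun p : Fin N × Fin N =>
            p.1 < p.2 ∧ x p.1 < x p.2 ∧ w (x p.2) < w (x p.1)))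
        ∪ (univ.filter (fun p : Fin N × Fin N => p.1 < p.2 ∧ x p.2 < x p.1)) := by
    ext p
    simp only [mem_filter, mem_union, mem_univ, true_and]
    simp only [Equiv.Perm.mul_apply]
    constructor
    · rintro ⟨hlt, hinv⟩
      have hne : x p.1 ≠ x p.2 := fun hh => (ne_of_lt hlt) (x.injective hh)
      rcases lt_or_gt_of_ne hne with h1 | h1
      · exact Or.inl ⟨hlt, h1, hinv⟩
      · exact Or.inr ⟨hlt, h1⟩
    · rintro (⟨hlt, _, hinv⟩ | ⟨hlt, hxin⟩)
      · exact ⟨hlt, hinv⟩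
      · exact ⟨hlt, h _ _ hlt hxin⟩
  have hdisj : Disjoint
      (univ.filter (fun p : Fin N × Fin N =>
          p.1 < p.2 ∧ x p.1 < x p.2 ∧ w (x p.2) < w (x p.1)))
      (univ.filter (fun p : Fin N × Fin N => p.1 < p.2 ∧ x p.2 < x p.1)) := by
    rw [Finset.disjoint_left]
    intro p hp hq
    simp only [mem_filter] at hp hq
    exact absurd hq.2.2 (not_lt_of_gt hp.2.2.1)
  have hcardw : (univ.filter (fun p : Fin N × Fin N =>
        p.1 < p.2 ∧ x p.1 < x p.2 ∧ w (x p.2) < w (x p.1))).card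
      = (univ.filter (fun p : Fin N × Fin N => p.1 < p.2 ∧ w p.2 < w p.1)).card := by
    apply Finset.card_bij (fun p _ => (x p.1, x p.2))
    · intro p hp
      simp only [mem_filter, mem_univ, true_and] at hp ⊢
      exact ⟨hp.2.1, hp.2.2⟩
    · intro p hp q hq hpq
      have h1 : x p.1 = x q.1 := congrArg Prod.fst hpq
      have h2 : x p.2 = x q.2 := congrArg Prod.snd hpq
      exact Prod.ext (x.injective h1) (x.injective h2)
    · intro q hq
      simp only [mem_filter, mem_univ, true_and] at hq
      refine ⟨(x⁻¹ q.1, x⁻¹ q.2), ?_, ?_⟩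
      · simp only [mem_filter, mem_univ, true_and, Equiv.Perm.coe_inv, Equiv.apply_symm_apply]
        have hne : x⁻¹ q.1 ≠ x⁻¹ q.2 := fun hh => (ne_of_lt hq.1) (by
          have := congrArg x hh; simpa using this)
        have hlt : x⁻¹ q.1 < x⁻¹ q.2 := by
          rcases lt_or_gt_of_ne hne with h1 | h1
          · exact h1
          · exfalso
            have h2 : x (x⁻¹ q.1) < x (x⁻¹ q.2) := by
              simpa using hq.1
            have := h (x⁻¹ q.2) (x⁻¹ q.1) h1 h2
            simp only [Equiv.Perm.coe_inv, Equiv.apply_symm_apply] at this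
            exact absurd hq.2 (not_lt_of_gt this)
        exact ⟨hlt, hq.1, hq.2⟩
      · simp
  rw [key, Finset.card_union_of_disjoint hdisj, hcardw]


/-- Sorting key: members of `S` (shifted by one) first, each block ordered by
position in `w`. -/
def keyF {N : ℕ} (S : Finset ℕ) (w : Equiv.Perm (Fin N)) (v : Fin N) : ℕ :=
  (if (v : ℕ) + 1 ∈ S then 0 else N) + (w⁻¹ v : ℕ)

lemma keyF_lt_iff {N : ℕ} (S : Finset ℕ) (w : Equiv.Perm (Fin N)) (v : Fin N) :
    keyF S w v < N ↔ (v : ℕ) + 1 ∈ S := by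
  unfold keyF
  by_cases h : (v : ℕ) + 1 ∈ S
  · have := (w⁻¹ v).is_lt
    simp only [h, if_true, zero_add, iff_true]
    omega
  · simp only [h, if_false, iff_false]
    omega

lemma keyF_injective {N : ℕ} (S : Finset ℕ) (w : Equiv.Perm (Fin N)) :
    Function.Injective (keyF S w) := by
  intro a b hab
  by_cases ha : (a : ℕ) + 1 ∈ S <;> by_cases hb : (b : ℕ) + 1 ∈ S <;>
    simp only [keyF, ha, hb, if_true, if_false, zero_add] at hab
  · exact w⁻¹.injective (Fin.ext hab)
  · have := (w⁻¹ a).is_lt; omega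
  · have := (w⁻¹ b).is_lt; omega
  · exact w⁻¹.injective (Fin.ext (by omega))

/-- The recursively defined sequence of permutations. -/
noncomputable def useq (N r : ℕ) (C : Fin r → Finset ℕ) : ℕ → Equiv.Perm (Fin N)
  | 0 => 1
  | (j+1) => if h : j < r then Tuple.sort (keyF (C ⟨j, h⟩) (useq N r C j))
             else useq N r C j

lemma strictMono_key_sort {N : ℕ} (S : Finset ℕ) (w : Equiv.Perm (Fin N)) :
    StrictMono (keyF S w ∘ Tuple.sort (keyF S w)) := by
  apply (Tuple.monotone_sort _).strictMono_of_injective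
  exact (keyF_injective S w).comp (Tuple.sort _).injective

/-- (P1) -/
lemma sort_inv_lt_iff {N : ℕ} (S : Finset ℕ) (w : Equiv.Perm (Fin N)) (v v' : Fin N) :
    (Tuple.sort (keyF S w))⁻¹ v < (Tuple.sort (keyF S w))⁻¹ v'
      ↔ keyF S w v < keyF S w v' := by
  have h := (strictMono_key_sort S w).lt_iff_lt
    (a := (Tuple.sort (keyF S w))⁻¹ v) (b := (Tuple.sort (keyF S w))⁻¹ v')
  simpa using h.symm

/-- (P5) same block comparison -/
lemma sort_inv_lt_iff_same {N : ℕ} (S : Finset ℕ) (w : Equiv.Perm (Fin N)) (v v' : Fin N)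
    (hsame : ((v : ℕ) + 1 ∈ S) ↔ ((v' : ℕ) + 1 ∈ S)) :
    (Tuple.sort (keyF S w))⁻¹ v < (Tuple.sort (keyF S w))⁻¹ v' ↔ w⁻¹ v < w⁻¹ v' := by
  rw [sort_inv_lt_iff]
  unfold keyF
  by_cases hv : (v : ℕ) + 1 ∈ S
  · simp only [hv, hsame.mp hv, if_true, zero_add, Fin.lt_iff_val_lt_val]
  · have hv' : (v' : ℕ) + 1 ∉ S := fun h => hv (hsame.mpr h)
    simp only [hv, hv', if_false, Fin.lt_iff_val_lt_val]
    omega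

/-- (P4) cross block comparison -/
lemma sort_inv_lt_cross {N : ℕ} (S : Finset ℕ) (w : Equiv.Perm (Fin N)) (v v' : Fin N)
    (hv : (v : ℕ) + 1 ∈ S) (hv' : (v' : ℕ) + 1 ∉ S) :
    (Tuple.sort (keyF S w))⁻¹ v < (Tuple.sort (keyF S w))⁻¹ v' := by
  rw [sort_inv_lt_iff]
  have h1 : keyF S w v < N := (keyF_lt_iff S w v).mpr hv
  have h2 : ¬ keyF S w v' < N := fun h => hv' ((keyF_lt_iff S w v').mp h)
  omega

/-- (P3): first `S.card` positions of the sorted permutation are exactly the members. -/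
lemma sort_mem_iff {N : ℕ} (S : Finset ℕ) (w : Equiv.Perm (Fin N))
    (hsub : S ⊆ Finset.Icc 1 N) (i : Fin N) :
    (i : ℕ) < S.card ↔ ((Tuple.sort (keyF S w) i : ℕ) + 1 ∈ S) := by
  classical
  set σ := Tuple.sort (keyF S w) with hσ
  set T : Finset (Fin N) := univ.filter (fun i : Fin N => keyF S w (σ i) < N) with hT
  have hTmem : ∀ i : Fin N, i ∈ T ↔ ((σ i : ℕ) + 1 ∈ S) := by
    intro i
    simp [hT, keyF_lt_iff]
  have hcard : T.card = S.card := by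
    apply Finset.card_bij (fun i _ => (σ i : ℕ) + 1)
    · intro a ha; exact (hTmem a).mp ha
    · intro a _ b _ hab
      exact σ.injective (Fin.ext (by omega))
    · intro m hm
      have hm' := hsub hm
      simp only [Finset.mem_Icc] at hm'
      refine ⟨σ⁻¹ ⟨m - 1, by omega⟩, ?_, ?_⟩
      · rw [hTmem]
        simp only [Equiv.Perm.coe_inv, Equiv.apply_symm_apply]
        have : (m - 1) + 1 = m := by omega
        simpa [this] using hm
      · simp only [Equiv.Perm.coe_inv, Equiv.apply_symm_apply]
        omega
  have hdown : ∀ i i' : Fin N, i ≤ i' → i' ∈ T → i ∈ T := by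
    intro i i' hle hi'
    simp only [hT, mem_filter, mem_univ, true_and] at hi' ⊢
    have hm : (keyF S w ∘ σ) i ≤ (keyF S w ∘ σ) i' := (Tuple.monotone_sort _) hle
    simp only [Function.comp] at hm
    omega
  have hiff : ∀ i : Fin N, i ∈ T ↔ (i : ℕ) < T.card := by
    intro i
    constructor
    · intro hi
      have hsubIic : Finset.Iic i ⊆ T := fun j hj => hdown j i (by simpa using hj) hi
      have := Finset.card_le_card hsubIic
      rw [Fin.card_Iic] at this
      omega
    · intro hi
      by_contra hnot
      have hsubIio : T ⊆ Finset.Iio i := by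
        intro j hj
        simp only [Finset.mem_Iio]
        by_contra hji
        exact hnot (hdown i j (le_of_not_gt hji) hj)
      have := Finset.card_le_card hsubIio
      rw [Fin.card_Iio] at this
      omega
  rw [← hcard, ← hiff, hTmem]

lemma useq_invariant {N r : ℕ} (C : Fin r → Finset ℕ) (j : ℕ) :
    ∀ a b : Fin N, a < b → (useq N r C j)⁻¹ b < (useq N r C j)⁻¹ a →
      ∃ i : ℕ, ∃ hi : i < r, i < j ∧ ((a : ℕ) + 1 ∉ C ⟨i, hi⟩) ∧ ((b : ℕ) + 1 ∈ C ⟨i, hi⟩) := by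
  induction j with
  | zero =>
    intro a b hab h
    simp only [useq, inv_one, Equiv.Perm.coe_one, id] at h
    exact absurd hab (not_lt_of_gt h)
  | succ j ih =>
    intro a b hab h
    by_cases hjr : j < r
    · simp only [useq, dif_pos hjr] at h
      by_cases ha : (a : ℕ) + 1 ∈ C ⟨j, hjr⟩ <;> by_cases hb : (b : ℕ) + 1 ∈ C ⟨j, hjr⟩
      · have := (sort_inv_lt_iff_same (C ⟨j, hjr⟩) (useq N r C j) b a (by tauto)).mp h
        obtain ⟨i, hi, hij, h1, h2⟩ := ih a b hab this
        exact ⟨i, hi, Nat.lt_succ_of_lt hij, h1, h2⟩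
      · exact absurd h
          (not_lt_of_gt (sort_inv_lt_cross (C ⟨j, hjr⟩) (useq N r C j) a b ha hb))
      · exact ⟨j, hjr, Nat.lt_succ_self j, ha, hb⟩
      · have := (sort_inv_lt_iff_same (C ⟨j, hjr⟩) (useq N r C j) b a (by tauto)).mp h
        obtain ⟨i, hi, hij, h1, h2⟩ := ih a b hab this
        exact ⟨i, hi, Nat.lt_succ_of_lt hij, h1, h2⟩
    · simp only [useq, dif_neg hjr] at h
      obtain ⟨i, hi, hij, h1, h2⟩ := ih a b hab h
      exact ⟨i, hi, Nat.lt_succ_of_lt hij, h1, h2⟩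

/-- For a northwest diagram with columns in `{1,…,N}` there is a monotone (in the weak
Bruhat order) sequence of permutations `u_1,…,u_r` of `{1,…,N}` (encoded on `Fin N`,
with `k : Fin N` standing for `k+1`, and `u 0 = id`), i.e.
`ℓ(u_j) = ℓ(u_{j-1}) + ℓ(u_{j-1}⁻¹ u_j)`, such that `u_j({1,…,|C_j|}) = C_j`. -/
theorem monotone_sequence_of_permutations (N r : ℕ) (hN : 1 ≤ N)
    (C : Fin r → Finset ℕ) (hNW : IsNorthwest C)
    (hsub : ∀ j, C j ⊆ Finset.Icc 1 N) :
    ∃ u : ℕ → Equiv.Perm (Fin N), u 0 = 1 ∧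
      ∀ (j : ℕ) (h1 : 1 ≤ j) (h2 : j ≤ r),
        invLen (u j) = invLen (u (j - 1)) + invLen ((u (j - 1))⁻¹ * u j) ∧
        Finset.image (fun k : Fin N => ((u j) k : ℕ) + 1)
            (Finset.univ.filter (fun k : Fin N => (k : ℕ) < (C ⟨j - 1, by omega⟩).card))
          = C ⟨j - 1, by omega⟩ := by
  classical
  refine ⟨useq N r C, rfl, ?_⟩
  intro j h1 h2
  obtain ⟨j', rfl⟩ : ∃ j', j = j' + 1 := ⟨j - 1, by omega⟩
  have hj' : j' < r := by omega
  have hmk : (⟨j' + 1 - 1, by omega⟩ : Fin r) = ⟨j', hj'⟩ := Fin.mk_eq_mk.mpr (by omega)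
  rw [hmk]
  have hJ : j' + 1 - 1 = j' := by omega
  rw [hJ]
  set w := useq N r C j' with hw
  set S := C ⟨j', hj'⟩ with hS
  have hstep : useq N r C (j' + 1) = Tuple.sort (keyF S w) := by
    simp only [useq, dif_pos hj', hw, hS]
  set σ := Tuple.sort (keyF S w) with hσ
  rw [hstep]
  have hsubS : S ⊆ Finset.Icc 1 N := hsub _
  constructor
  · -- length additivity
    have hyp : ∀ i k : Fin N, i < k → (w⁻¹ * σ) k < (w⁻¹ * σ) i →
        w ((w⁻¹ * σ) k) < w ((w⁻¹ * σ) i) := by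
      intro i k hik hx
      simp only [Equiv.Perm.mul_apply, Equiv.Perm.coe_inv, Equiv.apply_symm_apply] at hx ⊢
      -- hx : w⁻¹ (σ k) < w⁻¹ (σ i) ; goal : σ k < σ i
      have hik' : σ⁻¹ (σ i) < σ⁻¹ (σ k) := by
        simpa [Equiv.Perm.coe_inv, Equiv.symm_apply_apply] using hik
      by_cases ha : (σ i : ℕ) + 1 ∈ S <;> by_cases hb : (σ k : ℕ) + 1 ∈ S
      · exfalso
        have := (sort_inv_lt_iff_same S w (σ k) (σ i) (by tauto)).mpr hx
        exact absurd hik' (not_lt_of_gt this)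
      · -- σ i ∈ block, σ k ∉ block : show σ k < σ i
        by_contra hnot
        have hne : σ k ≠ σ i := fun hh => (ne_of_lt hik) (σ.injective hh).symm
        have hab : σ i < σ k := lt_of_le_of_ne (le_of_not_gt hnot) (Ne.symm hne)
        obtain ⟨i', hi', _, hnm, hm⟩ := useq_invariant C j' (σ i) (σ k) hab hx
        have hle : (⟨i', hi'⟩ : Fin r) ≤ ⟨j', hj'⟩ := by
          simp only [Fin.mk_le_mk]
          omega
        have := hNW ⟨i', hi'⟩ ⟨j', hj'⟩ hle _ hm _ ha
        have hmin : min ((σ k : ℕ) + 1) ((σ i : ℕ) + 1) = (σ i : ℕ) + 1 := by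
          have : (σ i : ℕ) < (σ k : ℕ) := hab
          omega
        rw [hmin] at this
        exact hnm this
      · exfalso
        have := sort_inv_lt_cross S w (σ k) (σ i) hb ha
        exact absurd hik' (not_lt_of_gt this)
      · exfalso
        have := (sort_inv_lt_iff_same S w (σ k) (σ i) (by tauto)).mpr hx
        exact absurd hik' (not_lt_of_gt this)
    have hadd := invLen_mul_add w (w⁻¹ * σ) hyp
    rwa [mul_inv_cancel_left] at hadd
  · -- image property
    ext m
    simp only [Finset.mem_image, Finset.mem_filter, Finset.mem_univ, true_and]
    constructor
    · rintro ⟨k, hk, rfl⟩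
      exact (sort_mem_iff S w hsubS k).mp hk
    · intro hm
      have hm' := hsubS hm
      simp only [Finset.mem_Icc] at hm'
      refine ⟨σ⁻¹ ⟨m - 1, by omega⟩, ?_, ?_⟩
      · rw [sort_mem_iff S w hsubS]
        simp only [← hσ, Equiv.Perm.coe_inv, Equiv.apply_symm_apply]
        have he : (m - 1) + 1 = m := by omega
        simpa [he] using hm
      · simp only [Equiv.Perm.coe_inv, Equiv.apply_symm_apply]
        omega
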